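/- (Goodstein's theorem, uniqueness) Let L be a bounded distributive lattice and let p, q: L^n → L be lattice polynomial functions given in DNF with monotone coefficient systems. If p(1_I) = q(1_I) for every I ⊆ [n], then p = q. -/
import Mathlib


/-- The characteristic vector `1_I ∈ L^n`: `i`-th component is `⊤` if `i ∈ I`, else `⊥`. -/
def charVec {n : ℕ} (L : Type*) [Preorder L] [BoundedOrder L] (I : Finset (Fin n)) :
    Fin n → L := fun i => if i ∈ I then ⊤ else ⊥

lemma eval_charVec {n : ℕ} {L : Type*} [DistribLattice L] [BoundedOrder L]
    (c : Finset (Fin n) → L) (hc : ∀ I J : Finset (Fin n), I ⊆ J → c I ≤ c J)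
    (I : Finset (Fin n)) :
    (Finset.univ.powerset).sup (fun K : Finset (Fin n) => c K ⊓ K.inf (charVec L I)) = c I := by
  apply le_antisymm
  · apply Finset.sup_le
    intro K _
    by_cases hKI : K ⊆ I
    · exact le_trans inf_le_left (hc K I hKI)
    · obtain ⟨i, hiK, hiI⟩ := Finset.not_subset.mp hKI
      have : K.inf (charVec L I) ≤ ⊥ := by
        refine le_trans (Finset.inf_le hiK) ?_
        simp [charVec, hiI]
      exact le_trans inf_le_right (le_trans this bot_le)
  · have hI : I ∈ Finset.univ.powerset := Finset.mem_powerset.mpr (Finset.subset_univ I)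
    refine le_trans ?_ (Finset.le_sup hI)
    have : I.inf (charVec L I) = ⊤ := by
      apply (Finset.inf_eq_top_iff _ _).mpr
      intro i hi
      simp [charVec, hi]
    simp [this]

/-- Goodstein, uniqueness: two DNF polynomial functions with monotone
coefficient systems agreeing on all characteristic vectors are equal. -/
theorem stmt_3 {n : ℕ} {L : Type*} [DistribLattice L] [BoundedOrder L]
    (c d : Finset (Fin n) → L)
    (hc : ∀ I J : Finset (Fin n), I ⊆ J → c I ≤ c J)
    (hd : ∀ I J : Finset (Fin n), I ⊆ J → d I ≤ d J)
    (h : ∀ I : Finset (Fin n),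
      (Finset.univ.powerset).sup (fun K : Finset (Fin n) => c K ⊓ K.inf (charVec L I)) =
        (Finset.univ.powerset).sup (fun K : Finset (Fin n) => d K ⊓ K.inf (charVec L I))) :
    ∀ x : Fin n → L,
      (Finset.univ.powerset).sup (fun K : Finset (Fin n) => c K ⊓ K.inf x) =
        (Finset.univ.powerset).sup (fun K : Finset (Fin n) => d K ⊓ K.inf x) := by
  have hcd : ∀ I, c I = d I := by
    intro I
    rw [← eval_charVec c hc I, ← eval_charVec d hd I]
    exact h I
  intro x
  exact Finset.sup_congr rfl (fun K _ => by rw [hcd K])
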